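/- Let 0 ≤ d < 1 and 0 ≤ i < 1 be real numbers. There exist constants 0 < c ≤ C such that for every integer n ≥ 2, c · n² ≤ W(n;i,d) ≤ C · n², where W(n;i,d) := n · ∑_{q=1}^{n−1} (q^{−i} / H_{n−1}(i)) · M₁(q,d). (This is the Metcalfe case of the paper's traffic-load theorem: the expected total number of destinations W(i,d) satisfies W = Θ(n²) when 0 ≤ d < 1 and 0 ≤ i < 1, reproducing Metcalfe's Law V ∝ n².) -/

import Mathlib

/-- `H m α = ∑_{j=1}^m j^{-α}` (generalized harmonic number). -/
noncomputable def H (m : ℕ) (α : ℝ) : ℝ := ∑ j ∈ Finset.Icc 1 m, (j : ℝ) ^ (-α)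

/-- Mean of the truncated Zipf distribution with exponent `d` on `{1,…,q}`. -/
noncomputable def M1 (q : ℕ) (d : ℝ) : ℝ :=
  (∑ r ∈ Finset.Icc 1 q, (r : ℝ) ^ (1 - d)) / (∑ r ∈ Finset.Icc 1 q, (r : ℝ) ^ (-d))

/-- Expected total number of data destinations over all `n` sessions. -/
noncomputable def W (n : ℕ) (i d : ℝ) : ℝ :=
  n * ∑ q ∈ Finset.Icc 1 (n - 1), ((q : ℝ) ^ (-i) / H (n - 1) i) * M1 q d

/-- Bernoulli step, `p ≤ 1` direction. -/
lemma step_le_one {p : ℝ} (hp0 : 0 ≤ p) (hp1 : p ≤ 1) (a : ℕ) :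
    p * ((a : ℝ) + 1) ^ (p - 1) ≤ ((a : ℝ) + 1) ^ p - (a : ℝ) ^ p := by
  have ha0 : (0:ℝ) ≤ (a:ℝ) := Nat.cast_nonneg a
  have hb0 : (0:ℝ) < (a:ℝ) + 1 := by positivity
  set b : ℝ := (a : ℝ) + 1 with hbdef
  set t : ℝ := (a : ℝ) / b with htdef
  have ht0 : 0 ≤ t := by positivity
  have hta : (a:ℝ) = t * b := (div_mul_cancel₀ _ hb0.ne').symm
  have hber : t ^ p ≤ 1 + p * (t - 1) := by
    have h := rpow_one_add_le_one_add_mul_self (s := t - 1) (by linarith) hp0 hp1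
    rwa [show (1:ℝ) + (t - 1) = t by ring] at h
  have hap : (a:ℝ) ^ p = t ^ p * b ^ p := by
    rw [hta, Real.mul_rpow ht0 hb0.le]
  have hbp : b ^ (p - 1) = b ^ p / b := by
    rw [Real.rpow_sub hb0, Real.rpow_one]
  have hinv : (1:ℝ) / b = 1 - t := by
    rw [htdef]; field_simp; rw [hbdef]; ring
  have hbppos : 0 < b ^ p := Real.rpow_pos_of_pos hb0 p
  have hdiv : b ^ p / b = b ^ p * (1 - t) := by rw [← hinv, mul_one_div]
  rw [hap, hbp, hdiv]
  nlinarith [mul_nonneg hbppos.le (by linarith : (0:ℝ) ≤ 1 + p * (t - 1) - t ^ p)]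

/-- Bernoulli step, `p ≥ 1` direction. -/
lemma step_ge_one {p : ℝ} (hp : 1 ≤ p) (a : ℕ) :
    ((a : ℝ) + 1) ^ p - (a : ℝ) ^ p ≤ p * ((a : ℝ) + 1) ^ (p - 1) := by
  have ha0 : (0:ℝ) ≤ (a:ℝ) := Nat.cast_nonneg a
  have hb0 : (0:ℝ) < (a:ℝ) + 1 := by positivity
  set b : ℝ := (a : ℝ) + 1 with hbdef
  set t : ℝ := (a : ℝ) / b with htdef
  have ht0 : 0 ≤ t := by positivity
  have hta : (a:ℝ) = t * b := (div_mul_cancel₀ _ hb0.ne').symm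
  have hber : 1 + p * (t - 1) ≤ t ^ p := by
    have h := one_add_mul_self_le_rpow_one_add (s := t - 1) (by linarith) hp
    rwa [show (1:ℝ) + (t - 1) = t by ring] at h
  have hap : (a:ℝ) ^ p = t ^ p * b ^ p := by
    rw [hta, Real.mul_rpow ht0 hb0.le]
  have hbp : b ^ (p - 1) = b ^ p / b := by
    rw [Real.rpow_sub hb0, Real.rpow_one]
  have hinv : (1:ℝ) / b = 1 - t := by
    rw [htdef]; field_simp; rw [hbdef]; ring
  have hbppos : 0 < b ^ p := Real.rpow_pos_of_pos hb0 p
  have hdiv : b ^ p / b = b ^ p * (1 - t) := by rw [← hinv, mul_one_div]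
  rw [hap, hbp, hdiv]
  nlinarith [mul_nonneg hbppos.le (by linarith : (0:ℝ) ≤ t ^ p - (1 + p * (t - 1)))]

lemma sum_rpow_le {p : ℝ} (hp0 : 0 < p) (hp1 : p ≤ 1) (q : ℕ) :
    ∑ r ∈ Finset.Icc 1 q, (r : ℝ) ^ (p - 1) ≤ (q : ℝ) ^ p / p := by
  induction q with
  | zero => simp [Real.zero_rpow hp0.ne']
  | succ q ih =>
      rw [Finset.sum_Icc_succ_top (by omega : 1 ≤ q + 1)]
      have hc : ((q + 1 : ℕ) : ℝ) = (q : ℝ) + 1 := by push_cast; ring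
      rw [hc]
      have hstep := step_le_one hp0.le hp1 q
      have h2 : ((q : ℝ) + 1) ^ (p - 1) ≤ (((q : ℝ) + 1) ^ p - (q : ℝ) ^ p) / p := by
        rw [le_div_iff₀ hp0]; linarith
      calc ∑ r ∈ Finset.Icc 1 q, (r : ℝ) ^ (p - 1) + ((q : ℝ) + 1) ^ (p - 1)
          ≤ (q : ℝ) ^ p / p + (((q : ℝ) + 1) ^ p - (q : ℝ) ^ p) / p := add_le_add ih h2
        _ = ((q : ℝ) + 1) ^ p / p := by rw [← add_div]; ring_nf

lemma sum_rpow_ge {p : ℝ} (hp : 1 ≤ p) (q : ℕ) :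
    (q : ℝ) ^ p / p ≤ ∑ r ∈ Finset.Icc 1 q, (r : ℝ) ^ (p - 1) := by
  have hp0 : 0 < p := lt_of_lt_of_le one_pos hp
  induction q with
  | zero => simp [Real.zero_rpow hp0.ne']
  | succ q ih =>
      rw [Finset.sum_Icc_succ_top (by omega : 1 ≤ q + 1)]
      have hc : ((q + 1 : ℕ) : ℝ) = (q : ℝ) + 1 := by push_cast; ring
      rw [hc]
      have hstep := step_ge_one hp q
      have h2 : (((q : ℝ) + 1) ^ p - (q : ℝ) ^ p) / p ≤ ((q : ℝ) + 1) ^ (p - 1) := by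
        rw [div_le_iff₀ hp0]; linarith
      calc ((q : ℝ) + 1) ^ p / p
          = (q : ℝ) ^ p / p + (((q : ℝ) + 1) ^ p - (q : ℝ) ^ p) / p := by
            rw [← add_div]; ring_nf
        _ ≤ ∑ r ∈ Finset.Icc 1 q, (r : ℝ) ^ (p - 1) + ((q : ℝ) + 1) ^ (p - 1) :=
            add_le_add ih h2

/-- Each term of the Zipf sums with exponent in `[0,1)` is positive. -/
lemma sum_neg_rpow_pos {α : ℝ} (q : ℕ) (hq : 1 ≤ q) :
    0 < ∑ r ∈ Finset.Icc 1 q, (r : ℝ) ^ (-α) := by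
  apply Finset.sum_pos
  · intro r hr
    have : 1 ≤ r := (Finset.mem_Icc.mp hr).1
    have : (0:ℝ) < r := by exact_mod_cast Nat.lt_of_lt_of_le Nat.zero_lt_one this
    exact Real.rpow_pos_of_pos this _
  · exact ⟨1, Finset.mem_Icc.mpr ⟨le_refl 1, hq⟩⟩

/-- Metcalfe case: `W(n;i,d) = Θ(n²)` for `0 ≤ d < 1` and `0 ≤ i < 1`. -/
theorem W_metcalfe (d i : ℝ) (hd0 : 0 ≤ d) (hd1 : d < 1) (hi0 : 0 ≤ i) (hi1 : i < 1) :
    ∃ c C : ℝ, 0 < c ∧ c ≤ C ∧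
      ∀ n : ℕ, 2 ≤ n →
        c * (n : ℝ) ^ 2 ≤ W n i d ∧ W n i d ≤ C * (n : ℝ) ^ 2 := by
  have hd1' : 0 < 1 - d := by linarith
  have hi1' : 0 < 1 - i := by linarith
  have hd2 : 0 < 2 - d := by linarith
  have hi2 : 0 < 2 - i := by linarith
  set κ : ℝ := (1 - d) / (2 - d) with hκdef
  set lam : ℝ := (1 - i) / (2 - i) with hlamdef
  have hκ : 0 < κ := div_pos hd1' hd2
  have hlam : 0 < lam := div_pos hi1' hi2
  have hκ1 : κ ≤ 1 := by
    rw [div_le_one hd2]; linarith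
  have hlam1 : lam ≤ 1 := by
    rw [div_le_one hi2]; linarith
  refine ⟨κ * lam / 2, 1, by positivity, by nlinarith, ?_⟩
  intro n hn
  set m : ℕ := n - 1 with hmdef
  have hm1 : 1 ≤ m := by omega
  have hmn : (m : ℝ) = (n : ℝ) - 1 := by
    have : (m : ℕ) + 1 = n := by omega
    have := congrArg (fun k : ℕ => (k : ℝ)) this
    push_cast at this; linarith
  have hmpos : (0:ℝ) < m := by exact_mod_cast Nat.lt_of_lt_of_le Nat.zero_lt_one hm1
  have hn0 : (0:ℝ) < n := by positivity
  have hn2 : (2:ℝ) ≤ n := by exact_mod_cast hn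
  -- Basic facts about H
  have hHpos : 0 < H m i := sum_neg_rpow_pos m hm1
  have hHle : H m i ≤ (m : ℝ) ^ (1 - i) / (1 - i) := by
    have := sum_rpow_le (p := 1 - i) hi1' (by linarith) m
    simpa [H, show (1 - i) - 1 = -i by ring] using this
  -- M1 bounds
  have hM1 : ∀ q : ℕ, 1 ≤ q → κ * q ≤ M1 q d ∧ M1 q d ≤ (q : ℝ) := by
    intro q hq
    have hqpos : (0:ℝ) < q := by exact_mod_cast Nat.lt_of_lt_of_le Nat.zero_lt_one hq
    have hDpos : 0 < ∑ r ∈ Finset.Icc 1 q, (r : ℝ) ^ (-d) := sum_neg_rpow_pos q hq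
    have hDle : ∑ r ∈ Finset.Icc 1 q, (r : ℝ) ^ (-d) ≤ (q : ℝ) ^ (1 - d) / (1 - d) := by
      have := sum_rpow_le (p := 1 - d) hd1' (by linarith) q
      simpa [show (1 - d) - 1 = -d by ring] using this
    have hNge : (q : ℝ) ^ (2 - d) / (2 - d) ≤ ∑ r ∈ Finset.Icc 1 q, (r : ℝ) ^ (1 - d) := by
      have := sum_rpow_ge (p := 2 - d) (by linarith) q
      simpa [show (2 - d) - 1 = 1 - d by ring] using this
    have hNpos : 0 < ∑ r ∈ Finset.Icc 1 q, (r : ℝ) ^ (1 - d) := by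
      apply Finset.sum_pos
      · intro r hr
        have : 1 ≤ r := (Finset.mem_Icc.mp hr).1
        have : (0:ℝ) < r := by exact_mod_cast Nat.lt_of_lt_of_le Nat.zero_lt_one this
        exact Real.rpow_pos_of_pos this _
      · exact ⟨1, Finset.mem_Icc.mpr ⟨le_refl 1, hq⟩⟩
    constructor
    · -- lower bound κ q ≤ M1
      have hratio : ((q : ℝ) ^ (2 - d) / (2 - d)) / ((q : ℝ) ^ (1 - d) / (1 - d))
          ≤ M1 q d := by
        rw [M1]
        exact div_le_div₀ hNpos.le hNge hDpos hDle
      have hqq : (q : ℝ) ^ (2 - d) = (q : ℝ) * (q : ℝ) ^ (1 - d) := by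
        rw [show (2 - d) = 1 + (1 - d) by ring, Real.rpow_add hqpos, Real.rpow_one]
      have heq : ((q : ℝ) ^ (2 - d) / (2 - d)) / ((q : ℝ) ^ (1 - d) / (1 - d)) = κ * q := by
        rw [hqq, hκdef]
        have hq1d : (0:ℝ) < (q : ℝ) ^ (1 - d) := Real.rpow_pos_of_pos hqpos _
        field_simp
      linarith [heq ▸ hratio]
    · -- upper bound M1 ≤ q
      rw [M1, div_le_iff₀ hDpos]
      rw [Finset.mul_sum]
      apply Finset.sum_le_sum
      intro r hr
      have hr1 : 1 ≤ r := (Finset.mem_Icc.mp hr).1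
      have hrq : r ≤ q := (Finset.mem_Icc.mp hr).2
      have hrpos : (0:ℝ) < r := by exact_mod_cast Nat.lt_of_lt_of_le Nat.zero_lt_one hr1
      have : (r : ℝ) ^ (1 - d) = (r : ℝ) * (r : ℝ) ^ (-d) := by
        rw [show (1 - d) = 1 + -d by ring, Real.rpow_add hrpos, Real.rpow_one]
      rw [this]
      have : (r : ℝ) ≤ (q : ℝ) := by exact_mod_cast hrq
      exact mul_le_mul_of_nonneg_right this (Real.rpow_pos_of_pos hrpos _).le
  constructor
  · -- lower bound
    have hWeq : W n i d = (n : ℝ) / H m i * ∑ q ∈ Finset.Icc 1 m, (q : ℝ) ^ (-i) * M1 q d := by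
      rw [W, Finset.mul_sum, Finset.mul_sum]
      apply Finset.sum_congr rfl
      intro q hq
      ring
    have hterm : ∀ q ∈ Finset.Icc 1 m, κ * (q : ℝ) ^ (1 - i) ≤ (q : ℝ) ^ (-i) * M1 q d := by
      intro q hq
      have hq1 : 1 ≤ q := (Finset.mem_Icc.mp hq).1
      have hqpos : (0:ℝ) < q := by exact_mod_cast Nat.lt_of_lt_of_le Nat.zero_lt_one hq1
      have h := (hM1 q hq1).1
      have hqi : (0:ℝ) < (q : ℝ) ^ (-i) := Real.rpow_pos_of_pos hqpos _
      have hmm : (q : ℝ) ^ (-i) * (κ * q) = κ * (q : ℝ) ^ (1 - i) := by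
        rw [show (1 - i) = -i + 1 by ring, Real.rpow_add hqpos, Real.rpow_one]
        ring
      calc κ * (q : ℝ) ^ (1 - i) = (q : ℝ) ^ (-i) * (κ * q) := hmm.symm
        _ ≤ (q : ℝ) ^ (-i) * M1 q d := mul_le_mul_of_nonneg_left h hqi.le
    have hsum : κ * ((m : ℝ) ^ (2 - i) / (2 - i)) ≤
        ∑ q ∈ Finset.Icc 1 m, (q : ℝ) ^ (-i) * M1 q d := by
      calc κ * ((m : ℝ) ^ (2 - i) / (2 - i))
          ≤ κ * ∑ q ∈ Finset.Icc 1 m, (q : ℝ) ^ (1 - i) := by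
            apply mul_le_mul_of_nonneg_left _ hκ.le
            have := sum_rpow_ge (p := 2 - i) (by linarith) m
            simpa [show (2 - i) - 1 = 1 - i by ring] using this
        _ = ∑ q ∈ Finset.Icc 1 m, κ * (q : ℝ) ^ (1 - i) := Finset.mul_sum _ _ _
        _ ≤ _ := Finset.sum_le_sum hterm
    -- W ≥ n/H * κ m^{2-i}/(2-i) ≥ n κ lam m ≥ (κ lam /2) n²
    have hstep1 : (n : ℝ) / H m i * (κ * ((m : ℝ) ^ (2 - i) / (2 - i))) ≤ W n i d := by
      rw [hWeq]
      apply mul_le_mul_of_nonneg_left hsum (by positivity)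
    have hstep2 : (n : ℝ) * (κ * lam * m) ≤ (n : ℝ) / H m i * (κ * ((m : ℝ) ^ (2 - i) / (2 - i))) := by
      have hH' : 0 < H m i := hHpos
      have hm2i : (m : ℝ) ^ (2 - i) = (m : ℝ) * (m : ℝ) ^ (1 - i) := by
        rw [show (2 - i) = 1 + (1 - i) by ring, Real.rpow_add hmpos, Real.rpow_one]
      have hHle' : H m i * (1 - i) ≤ (m : ℝ) ^ (1 - i) := by
        rw [← le_div_iff₀ hi1']; exact hHle
      have hm1i : 0 < (m : ℝ) ^ (1 - i) := Real.rpow_pos_of_pos hmpos _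
      have key : lam * (m : ℝ) * H m i ≤ (m : ℝ) ^ (2 - i) / (2 - i) := by
        rw [hm2i, hlamdef, le_div_iff₀ hi2]
        calc (1 - i) / (2 - i) * m * H m i * (2 - i)
            = (m : ℝ) * (H m i * (1 - i)) := by field_simp
          _ ≤ (m : ℝ) * (m : ℝ) ^ (1 - i) := mul_le_mul_of_nonneg_left hHle' hmpos.le
      have h1 := mul_le_mul_of_nonneg_left key
        (show (0:ℝ) ≤ (n : ℝ) * κ / H m i by positivity)
      have h2 : (n : ℝ) * κ / H m i * (lam * (m : ℝ) * H m i) = (n : ℝ) * (κ * lam * m) := by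
        rw [div_mul_eq_mul_div, div_eq_iff hHpos.ne']; ring
      have h3 : (n : ℝ) * κ / H m i * ((m : ℝ) ^ (2 - i) / (2 - i))
          = (n : ℝ) / H m i * (κ * ((m : ℝ) ^ (2 - i) / (2 - i))) := by ring
      calc (n : ℝ) * (κ * lam * m) = (n : ℝ) * κ / H m i * (lam * (m : ℝ) * H m i) := h2.symm
        _ ≤ (n : ℝ) * κ / H m i * ((m : ℝ) ^ (2 - i) / (2 - i)) := h1
        _ = (n : ℝ) / H m i * (κ * ((m : ℝ) ^ (2 - i) / (2 - i))) := h3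
    have hmhalf : (n : ℝ) / 2 ≤ (m : ℝ) := by rw [hmn]; linarith
    have h4 := mul_le_mul_of_nonneg_left hmhalf
      (show (0:ℝ) ≤ (n : ℝ) * (κ * lam) by positivity)
    have h5 : κ * lam / 2 * (n : ℝ) ^ 2 ≤ (n : ℝ) * (κ * lam * m) := by nlinarith [h4]
    linarith
  · -- upper bound
    have hterm : ∀ q ∈ Finset.Icc 1 m, ((q : ℝ) ^ (-i) / H m i) * M1 q d
        ≤ ((q : ℝ) ^ (-i) / H m i) * n := by
      intro q hq
      have hq1 : 1 ≤ q := (Finset.mem_Icc.mp hq).1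
      have hqpos : (0:ℝ) < q := by exact_mod_cast Nat.lt_of_lt_of_le Nat.zero_lt_one hq1
      have hqm : q ≤ m := (Finset.mem_Icc.mp hq).2
      have hqn : (q : ℝ) ≤ (n : ℝ) := by
        have : (q : ℝ) ≤ (m : ℝ) := by exact_mod_cast hqm
        rw [hmn] at this; linarith
      have h := (hM1 q hq1).2
      apply mul_le_mul_of_nonneg_left (h.trans hqn)
      positivity
    have hsum1 : ∑ q ∈ Finset.Icc 1 m, ((q : ℝ) ^ (-i) / H m i) * n
        = (n : ℝ) := by
      rw [← Finset.sum_mul]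
      have : ∑ q ∈ Finset.Icc 1 m, (q : ℝ) ^ (-i) / H m i = 1 := by
        rw [← Finset.sum_div,
          show (∑ q ∈ Finset.Icc 1 m, (q : ℝ) ^ (-i)) = H m i from rfl,
          div_self hHpos.ne']
      rw [this, one_mul]
    have : W n i d ≤ (n : ℝ) * (n : ℝ) := by
      rw [W]
      apply mul_le_mul_of_nonneg_left _ hn0.le
      calc ∑ q ∈ Finset.Icc 1 m, ((q : ℝ) ^ (-i) / H m i) * M1 q d
          ≤ ∑ q ∈ Finset.Icc 1 m, ((q : ℝ) ^ (-i) / H m i) * n := Finset.sum_le_sum hterm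
        _ = (n : ℝ) := hsum1
    nlinarith
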